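/- arXiv:0808.0180 — 2 statements merged into one kernel-verified Lean document; each statement's English description precedes it below -/
import Mathlib

section
/- Let n be a positive integer. For all functions f and g in the complex linear span of {e_j : j ∈ Λ_n}, one has (1/(2n²)) · Σ_{k ∈ X_n^*} c_k · f(k/(2n)) · conj(g(k/(2n))) = ∫_{[−1/2,1/2]²} f(x) · conj(g(x)) dx. -/
open MeasureTheory Complex

attribute [local instance] Classical.propDecidable

/-- The exponential e_k(x) = exp(2 pi i (k1 x1 + k2 x2)). -/
noncomputable def e2 (k : ℤ × ℤ) (x : ℝ × ℝ) : ℂ :=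
  Complex.exp (2 * Real.pi * Complex.I * ((k.1 : ℂ) * x.1 + (k.2 : ℂ) * x.2))

/-- The point k/(2n) in the plane. -/
noncomputable def pt2 (n : ℕ) (k : ℤ × ℤ) : ℝ × ℝ :=
  ((k.1 : ℝ) / (2 * n), (k.2 : ℝ) / (2 * n))

/-- Λ_n = {j : -n ≤ j1+j2 < n and -n ≤ j2-j1 < n}. -/
noncomputable def Lam (n : ℕ) : Finset (ℤ × ℤ) :=
  (Finset.Icc (-(n : ℤ), -(n : ℤ)) ((n : ℤ), (n : ℤ))).filter
    fun j => -(n : ℤ) ≤ j.1 + j.2 ∧ j.1 + j.2 < (n : ℤ) ∧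
      -(n : ℤ) ≤ j.2 - j.1 ∧ j.2 - j.1 < (n : ℤ)

/-- X_n^* = {k : k1 ≡ k2 (mod 2), |k_i| ≤ n}. -/
noncomputable def X2star (n : ℕ) : Finset (ℤ × ℤ) :=
  (Finset.Icc (-(n : ℤ), -(n : ℤ)) ((n : ℤ), (n : ℤ))).filter
    fun k => k.1 % 2 = k.2 % 2

/-- The weight c_k on X_n^*. -/
noncomputable def c2 (n : ℕ) (k : ℤ × ℤ) : ℝ :=
  if |k.1| < (n : ℤ) ∧ |k.2| < (n : ℤ) then 1
  else if |k.1| = (n : ℤ) ∧ |k.2| = (n : ℤ) then 1/4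
  else 1/2

lemma sum_ch (n : ℕ) (hn : 0 < n) (r : ℤ) :
    ∑ t ∈ Finset.Icc (-(n:ℤ)) (n:ℤ), (if |t| = (n:ℤ) then (1/2 : ℂ) else 1) *
      Complex.exp (Real.pi * Complex.I * r * t / n)
    = if (2*(n:ℤ)) ∣ r then (2*(n:ℕ) : ℂ) else 0 := by
  have hN : ((n:ℂ)) ≠ 0 := Nat.cast_ne_zero.mpr hn.ne'
  set q : ℂ := Complex.exp (Real.pi * Complex.I * r / n) with hq
  have hqne : q ≠ 0 := Complex.exp_ne_zero _
  have hch : ∀ t : ℤ, Complex.exp (Real.pi * Complex.I * r * t / n) = q ^ t := by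
    intro t
    rw [hq, ← Complex.exp_int_mul]
    congr 1; push_cast; ring
  have hq2n : q ^ ((2*(n:ℤ))) = 1 := by
    rw [← Complex.exp_int_mul]
    rw [show (((2*(n:ℤ)) : ℤ) : ℂ) * (Real.pi * Complex.I * r / n) = r * (2 * Real.pi * Complex.I) by
      push_cast; field_simp]
    exact Complex.exp_int_mul_two_pi_mul_I r
  -- reduce Icc weighted sum to Ico plain sum
  have step1 : ∑ t ∈ Finset.Icc (-(n:ℤ)) (n:ℤ), (if |t| = (n:ℤ) then (1/2 : ℂ) else 1) *
      Complex.exp (Real.pi * Complex.I * r * t / n)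
      = ∑ t ∈ Finset.Ico (-(n:ℤ)) (n:ℤ), q ^ t := by
    have h1 : -(n:ℤ) < n := by omega
    have hIcc : Finset.Icc (-(n:ℤ)) (n:ℤ) = insert (n:ℤ) (Finset.Ico (-(n:ℤ)) (n:ℤ)) := by
      rw [Finset.Ico_insert_right h1.le]
    have hIco : Finset.Ico (-(n:ℤ)) (n:ℤ) = insert (-(n:ℤ)) (Finset.Ioo (-(n:ℤ)) (n:ℤ)) := by
      rw [Finset.Ioo_insert_left h1]
    have hqn : q ^ ((n:ℤ)) * 1 = (1/2) * q ^ ((n:ℤ)) + (1/2) * q ^ (-(n:ℤ)) := by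
      have : q ^ ((n:ℤ)) = q ^ (-(n:ℤ)) := by
        have := hq2n
        rw [show (2*(n:ℤ)) = n - (-(n:ℤ)) by ring, zpow_sub₀ hqne] at this
        field_simp at this ⊢
        linear_combination this
      rw [this]; ring
    rw [hIcc, Finset.sum_insert (by simp), hIco, Finset.sum_insert (by simp),
        Finset.sum_insert (by simp)]
    simp only [hch]
    rw [if_pos (by simp), if_pos (by rw [abs_neg]; simp)]
    have hint : ∀ t ∈ Finset.Ioo (-(n:ℤ)) (n:ℤ),
        (if |t| = (n:ℤ) then (1/2 : ℂ) else 1) * q ^ t = q ^ t := by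
      intro t ht
      rw [Finset.mem_Ioo] at ht
      rw [if_neg (by rw [abs_eq (by positivity)]; omega), one_mul]
    rw [Finset.sum_congr rfl hint]
    linear_combination hqn
  rw [step1]
  by_cases hd : (2*(n:ℤ)) ∣ r
  · rw [if_pos hd]
    obtain ⟨s, hs⟩ := hd
    have hq1 : q = 1 := by
      rw [hq, hs, show (Real.pi : ℂ) * Complex.I * ((2*(n:ℤ)) * s : ℤ) / n
        = (s : ℂ) * (2 * Real.pi * Complex.I) by push_cast; field_simp]
      exact Complex.exp_int_mul_two_pi_mul_I s
    simp only [hq1, one_zpow, Finset.sum_const, nsmul_eq_mul, mul_one]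
    rw [Int.card_Ico, show ((n:ℤ) - -(n:ℤ)).toNat = 2*n by omega]
    push_cast; ring
  · rw [if_neg hd]
    have hq1 : q ≠ 1 := by
      intro h
      rw [hq, Complex.exp_eq_one_iff] at h
      obtain ⟨k, hk⟩ := h
      apply hd
      field_simp at hk
      have h2 : (Real.pi:ℂ) * Complex.I * r = (Real.pi:ℂ) * Complex.I * (2*(n:ℂ)*k) := by
        linear_combination (Real.pi * Complex.I) * hk
      have h3 := mul_left_cancel₀ (mul_ne_zero (by exact_mod_cast Real.pi_ne_zero) Complex.I_ne_zero) h2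
      have : (r : ℂ) = ((2*(n:ℤ)*k : ℤ) : ℂ) := by push_cast; linear_combination h3
      exact ⟨k, by exact_mod_cast this⟩
    -- geometric sum
    have : ∑ t ∈ Finset.Ico (-(n:ℤ)) (n:ℤ), q ^ t
        = q ^ (-(n:ℤ)) * ∑ i ∈ Finset.range (2*n), q ^ i := by
      rw [Finset.mul_sum]
      refine Finset.sum_nbij' (i := fun t : ℤ => (t + n).toNat) (j := fun i : ℕ => (i : ℤ) - n)
        ?_ ?_ ?_ ?_ ?_
      · intro t ht; rw [Finset.mem_Ico] at ht; rw [Finset.mem_range]; omega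
      · intro i hi; rw [Finset.mem_range] at hi; rw [Finset.mem_Ico]; omega
      · intro t ht; rw [Finset.mem_Ico] at ht; omega
      · intro i hi; rw [Finset.mem_range] at hi; omega
      · intro t ht
        rw [Finset.mem_Ico] at ht
        rw [← zpow_natCast q, ← zpow_add₀ hqne]
        congr 1; omega
    rw [this, geom_sum_eq hq1]
    rw [show (2*n : ℕ) = ((2*(n:ℤ)).toNat) by omega, ← zpow_natCast q, Int.toNat_of_nonneg (by positivity), hq2n]
    simp
lemma disc_sum (n : ℕ) (hn : 0 < n) (m : ℤ × ℤ)
    (h1 : -(2*(n:ℤ)) < m.1 + m.2) (h2 : m.1 + m.2 < 2*(n:ℤ))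
    (h3 : -(2*(n:ℤ)) < m.2 - m.1) (h4 : m.2 - m.1 < 2*(n:ℤ)) :
    (1 / (2 * (n : ℂ) ^ 2)) * ∑ k ∈ X2star n, (c2 n k : ℂ) *
      Complex.exp (Real.pi * Complex.I * ((m.1 : ℂ) * k.1 + (m.2 : ℂ) * k.2) / n)
      = if m = 0 then 1 else 0 := by
  have hN : ((n:ℂ)) ≠ 0 := Nat.cast_ne_zero.mpr hn.ne'
  set W : ℤ → ℂ := fun t => if |t| = (n:ℤ) then (1/2 : ℂ) else 1 with hW
  have hexp : ∀ t : ℤ, Complex.exp (Real.pi * Complex.I * t) = (-1 : ℂ) ^ t := by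
    intro t
    rw [show (Real.pi:ℂ) * Complex.I * t = t * ((Real.pi:ℂ) * Complex.I) by ring,
      Complex.exp_int_mul, Complex.exp_pi_mul_I]
  -- pointwise identity on the box
  have point : ∀ k ∈ Finset.Icc ((-(n:ℤ), -(n:ℤ))) (((n:ℤ), (n:ℤ))),
      (if k.1 % 2 = k.2 % 2 then (c2 n k : ℂ) *
        Complex.exp (Real.pi * Complex.I * ((m.1 : ℂ) * k.1 + (m.2 : ℂ) * k.2) / n) else 0)
      = (1/2) * ((W k.1 * Complex.exp (Real.pi * Complex.I * m.1 * k.1 / n)) *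
            (W k.2 * Complex.exp (Real.pi * Complex.I * m.2 * k.2 / n))
          + (W k.1 * Complex.exp (Real.pi * Complex.I * (m.1 + n) * k.1 / n)) *
            (W k.2 * Complex.exp (Real.pi * Complex.I * (m.2 + n) * k.2 / n))) := by
    rintro ⟨k1, k2⟩ hk
    rw [Finset.mem_Icc, Prod.le_def, Prod.le_def] at hk
    obtain ⟨⟨ha1, ha2⟩, hb1, hb2⟩ := hk
    simp only at ha1 ha2 hb1 hb2 ⊢
    have habs1 : |k1| ≤ (n:ℤ) := abs_le.mpr ⟨ha1, hb1⟩
    have habs2 : |k2| ≤ (n:ℤ) := abs_le.mpr ⟨ha2, hb2⟩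
    have hc : (c2 n (k1, k2) : ℂ) = W k1 * W k2 := by
      by_cases e1 : |k1| = (n:ℤ) <;> by_cases e2 : |k2| = (n:ℤ) <;>
        simp [c2, hW, e1, e2, lt_of_le_of_ne habs1, lt_of_le_of_ne habs2] <;>
        norm_num
    have hE : Complex.exp (Real.pi * Complex.I * ((m.1 : ℂ) * k1 + (m.2 : ℂ) * k2) / n)
        = Complex.exp (Real.pi * Complex.I * m.1 * k1 / n) *
          Complex.exp (Real.pi * Complex.I * m.2 * k2 / n) := by
      rw [← Complex.exp_add]; congr 1; field_simp
    have hs1 : Complex.exp (Real.pi * Complex.I * ((m.1:ℤ) + (n:ℤ) : ℤ) * k1 / n)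
        = Complex.exp (Real.pi * Complex.I * m.1 * k1 / n) * (-1 : ℂ) ^ k1 := by
      rw [← hexp k1, ← Complex.exp_add]; congr 1; push_cast; field_simp
    have hs2 : Complex.exp (Real.pi * Complex.I * ((m.2:ℤ) + (n:ℤ) : ℤ) * k2 / n)
        = Complex.exp (Real.pi * Complex.I * m.2 * k2 / n) * (-1 : ℂ) ^ k2 := by
      rw [← hexp k2, ← Complex.exp_add]; congr 1; push_cast; field_simp
    have hmm : ((-1 : ℂ) ^ k1) * ((-1 : ℂ) ^ k2) = (-1 : ℂ) ^ (k1 + k2) :=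
      (zpow_add₀ (by norm_num) _ _).symm
    push_cast at hs1 hs2
    rw [hE, hc, hs1, hs2]
    by_cases hpar : k1 % 2 = k2 % 2
    · rw [if_pos hpar]
      have : (-1 : ℂ) ^ k1 * (-1 : ℂ) ^ k2 = 1 := by
        rw [hmm]
        exact Even.neg_one_zpow (by rw [Int.even_add, Int.even_iff, Int.even_iff]; omega)
      linear_combination (-(W k1 * W k2 * Complex.exp (Real.pi * Complex.I * m.1 * k1 / n) *
        Complex.exp (Real.pi * Complex.I * m.2 * k2 / n)) / 2) * this
    · rw [if_neg hpar]
      have : (-1 : ℂ) ^ k1 * (-1 : ℂ) ^ k2 = -1 := by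
        rw [hmm]
        exact Odd.neg_one_zpow (by rw [Int.odd_add, Int.even_iff, Int.odd_iff]; omega)
      linear_combination (-(W k1 * W k2 * Complex.exp (Real.pi * Complex.I * m.1 * k1 / n) *
        Complex.exp (Real.pi * Complex.I * m.2 * k2 / n)) / 2) * this
  -- decompose the sum
  have hbox : Finset.Icc ((-(n:ℤ), -(n:ℤ))) (((n:ℤ), (n:ℤ)))
      = Finset.Icc (-(n:ℤ)) (n:ℤ) ×ˢ Finset.Icc (-(n:ℤ)) (n:ℤ) := Finset.Icc_prod_def _ _
  have key : ∑ k ∈ X2star n, (c2 n k : ℂ) *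
      Complex.exp (Real.pi * Complex.I * ((m.1 : ℂ) * k.1 + (m.2 : ℂ) * k.2) / n)
      = (1/2) * ((if (2*(n:ℤ)) ∣ m.1 then (2*(n:ℕ) : ℂ) else 0) *
                 (if (2*(n:ℤ)) ∣ m.2 then (2*(n:ℕ) : ℂ) else 0)
        + (if (2*(n:ℤ)) ∣ (m.1 + n) then (2*(n:ℕ) : ℂ) else 0) *
          (if (2*(n:ℤ)) ∣ (m.2 + n) then (2*(n:ℕ) : ℂ) else 0)) := by
    rw [X2star, Finset.sum_filter, Finset.sum_congr rfl point, ← Finset.mul_sum]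
    congr 1
    rw [hbox, Finset.sum_add_distrib]
    congr 1
    · rw [← sum_ch n hn m.1, ← sum_ch n hn m.2, Finset.sum_mul_sum, Finset.sum_product]
    · rw [← sum_ch n hn (m.1 + n), ← sum_ch n hn (m.2 + n), Finset.sum_mul_sum,
        Finset.sum_product]
      push_cast
      rfl
  rw [key]
  -- second product always vanishes
  have hQ : (if (2*(n:ℤ)) ∣ (m.1 + n) then (2*(n:ℕ) : ℂ) else 0) *
      (if (2*(n:ℤ)) ∣ (m.2 + n) then (2*(n:ℕ) : ℂ) else 0) = 0 := by
    by_cases hA : (2*(n:ℤ)) ∣ (m.1 + n)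
    · by_cases hB : (2*(n:ℤ)) ∣ (m.2 + n)
      · exfalso
        obtain ⟨a, ha⟩ := hA
        obtain ⟨b, hb⟩ := hB
        have d1 : (2*(n:ℤ)) ∣ (m.1 + m.2) := ⟨a + b - 1, by linear_combination ha + hb⟩
        have d2 : (2*(n:ℤ)) ∣ (m.2 - m.1) := ⟨b - a, by linear_combination hb - ha⟩
        have e1 : m.1 + m.2 = 0 := Int.eq_zero_of_abs_lt_dvd d1 (abs_lt.mpr ⟨h1, h2⟩)
        have e2 : m.2 - m.1 = 0 := Int.eq_zero_of_abs_lt_dvd d2 (abs_lt.mpr ⟨h3, h4⟩)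
        have hm1 : m.1 = 0 := by omega
        have hdn : (2*(n:ℤ)) ∣ (n:ℤ) := ⟨a, by linear_combination ha - hm1⟩
        have := Int.le_of_dvd (by exact_mod_cast hn) hdn
        omega
      · rw [if_neg hB, mul_zero]
    · rw [if_neg hA, zero_mul]
  rw [hQ, add_zero]
  by_cases hm : m = 0
  · rw [if_pos hm]
    have d01 : (2*(n:ℤ)) ∣ m.1 := by rw [hm, Prod.fst_zero]; exact dvd_zero _
    have d02 : (2*(n:ℤ)) ∣ m.2 := by rw [hm, Prod.snd_zero]; exact dvd_zero _
    rw [if_pos d01, if_pos d02]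
    field_simp
  · rw [if_neg hm]
    have hP : ¬((2*(n:ℤ)) ∣ m.1 ∧ (2*(n:ℤ)) ∣ m.2) := by
      rintro ⟨⟨a, ha⟩, ⟨b, hb⟩⟩
      have d1 : (2*(n:ℤ)) ∣ (m.1 + m.2) := ⟨a + b, by linear_combination ha + hb⟩
      have d2 : (2*(n:ℤ)) ∣ (m.2 - m.1) := ⟨b - a, by linear_combination hb - ha⟩
      have e1 : m.1 + m.2 = 0 := Int.eq_zero_of_abs_lt_dvd d1 (abs_lt.mpr ⟨h1, h2⟩)
      have e2 : m.2 - m.1 = 0 := Int.eq_zero_of_abs_lt_dvd d2 (abs_lt.mpr ⟨h3, h4⟩)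
      exact hm (Prod.ext_iff.mpr ⟨by simp only [Prod.fst_zero]; omega,
        by simp only [Prod.snd_zero]; omega⟩)
    by_cases hA : (2*(n:ℤ)) ∣ m.1
    · rw [if_neg (fun hB => hP ⟨hA, hB⟩)]
      ring
    · rw [if_neg hA]
      ring
-- 1-D integral lemma
lemma int_ch (r : ℤ) :
    ∫ t in Set.Icc (-(1:ℝ)/2) (1/2), Complex.exp (2 * Real.pi * Complex.I * r * t)
      = if r = 0 then 1 else 0 := by
  rw [MeasureTheory.integral_Icc_eq_integral_Ioc,
    ← intervalIntegral.integral_of_le (by norm_num : (-(1:ℝ)/2) ≤ 1/2)]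
  by_cases hr : r = 0
  · simp [hr]; norm_num
  · have hc : (2 * (Real.pi:ℂ) * Complex.I * r) ≠ 0 := by
      simp [Real.pi_ne_zero, Complex.I_ne_zero, hr]
    have := integral_exp_mul_complex (a := -(1:ℝ)/2) (b := 1/2) hc
    simp only [hr, if_false]
    rw [show (fun t : ℝ => Complex.exp (2 * Real.pi * Complex.I * r * t)) =
      (fun t : ℝ => Complex.exp ((2 * (Real.pi:ℂ) * Complex.I * r) * t)) from rfl, this]
    have key : (2 * (Real.pi:ℂ) * Complex.I * r) * ((1:ℝ)/2 : ℝ)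
        = (2 * (Real.pi:ℂ) * Complex.I * r) * ((-(1:ℝ)/2 : ℝ)) + r * (2 * Real.pi * Complex.I) := by
      push_cast; ring
    rw [key, Complex.exp_add, Complex.exp_int_mul_two_pi_mul_I, mul_one, sub_self, zero_div]
lemma e2_cont (k : ℤ × ℤ) : Continuous (e2 k) := by
  unfold e2
  fun_prop

lemma mul_star_e2 (j l : ℤ × ℤ) (x : ℝ × ℝ) :
    e2 j x * star (e2 l x) = e2 (j - l) x := by
  unfold e2
  rw [Complex.star_def, ← Complex.exp_conj, ← Complex.exp_add]
  congr 1
  simp only [map_mul, map_add, Complex.conj_I, Complex.conj_ofReal, map_intCast,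
    map_ofNat, Prod.fst_sub, Prod.snd_sub]
  push_cast
  ring

lemma int_e2 (m : ℤ × ℤ) :
    (∫ x in Set.Icc ((-(1:ℝ)/2, -(1:ℝ)/2)) (((1:ℝ)/2, (1:ℝ)/2)), e2 m x)
      = if m = 0 then 1 else 0 := by
  have hint : IntegrableOn (e2 m)
      (Set.Icc ((-(1:ℝ)/2, -(1:ℝ)/2)) (((1:ℝ)/2, (1:ℝ)/2))) volume :=
    (e2_cont m).integrableOn_Icc
  rw [Set.Icc_prod_eq] at hint ⊢
  rw [MeasureTheory.Measure.volume_eq_prod] at hint ⊢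
  rw [MeasureTheory.setIntegral_prod _ hint]
  have hsplit : ∀ x y : ℝ, e2 m (x, y)
      = Complex.exp (2 * Real.pi * Complex.I * m.1 * x) *
        Complex.exp (2 * Real.pi * Complex.I * m.2 * y) := by
    intro x y
    unfold e2
    rw [← Complex.exp_add]
    congr 1
    push_cast
    ring
  calc (∫ x in Set.Icc (-(1:ℝ)/2) (1/2), ∫ y in Set.Icc (-(1:ℝ)/2) (1/2), e2 m (x, y))
      = (∫ x in Set.Icc (-(1:ℝ)/2) (1/2), Complex.exp (2 * Real.pi * Complex.I * m.1 * x) *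
          ∫ y in Set.Icc (-(1:ℝ)/2) (1/2), Complex.exp (2 * Real.pi * Complex.I * m.2 * y)) := by
        refine setIntegral_congr_fun measurableSet_Icc (fun x _ => ?_)
        rw [← MeasureTheory.integral_const_mul]
        exact setIntegral_congr_fun measurableSet_Icc (fun y _ => hsplit x y)
    _ = (∫ x in Set.Icc (-(1:ℝ)/2) (1/2), Complex.exp (2 * Real.pi * Complex.I * m.1 * x)) *
          ∫ y in Set.Icc (-(1:ℝ)/2) (1/2), Complex.exp (2 * Real.pi * Complex.I * m.2 * y) := by
        rw [MeasureTheory.integral_mul_const]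
    _ = (if m.1 = 0 then 1 else 0) * (if m.2 = 0 then 1 else 0) := by
        rw [int_ch m.1, int_ch m.2]
    _ = if m = 0 then 1 else 0 := by
        by_cases h1 : m.1 = 0 <;> by_cases h2 : m.2 = 0 <;>
          simp [h1, h2, Prod.ext_iff]

lemma cont_of_mem {n : ℕ} (f : ℝ × ℝ → ℂ)
    (hf : f ∈ Submodule.span ℂ (e2 '' (Lam n : Set (ℤ × ℤ)))) : Continuous f := by
  induction hf using Submodule.span_induction with
  | mem f hf => obtain ⟨j, -, rfl⟩ := hf; exact e2_cont j
  | zero => exact continuous_const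
  | add x y hx hy ihx ihy => exact ihx.add ihy
  | smul a x hx ih => exact ih.const_smul a

lemma integ (f g : ℝ × ℝ → ℂ) (hf : Continuous f) (hg : Continuous g) :
    IntegrableOn (fun x => f x * star (g x))
      (Set.Icc ((-(1:ℝ)/2, -(1:ℝ)/2)) (((1:ℝ)/2, (1:ℝ)/2))) volume :=
  (hf.mul hg.star).integrableOn_Icc

lemma base_case (n : ℕ) (hn : 0 < n) (j l : ℤ × ℤ) (hj : j ∈ Lam n) (hl : l ∈ Lam n) :
    (1 / (2 * (n : ℂ) ^ 2)) * ∑ k ∈ X2star n,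
        (c2 n k : ℂ) * e2 j (pt2 n k) * star (e2 l (pt2 n k))
      = ∫ x in Set.Icc ((-(1:ℝ)/2, -(1:ℝ)/2)) (((1:ℝ)/2, (1:ℝ)/2)),
          e2 j x * star (e2 l x) := by
  have hN : ((n:ℂ)) ≠ 0 := Nat.cast_ne_zero.mpr hn.ne'
  rw [Lam, Finset.mem_filter] at hj hl
  obtain ⟨-, hj1, hj2, hj3, hj4⟩ := hj
  obtain ⟨-, hl1, hl2, hl3, hl4⟩ := hl
  have hpt : ∀ k : ℤ × ℤ, e2 j (pt2 n k) * star (e2 l (pt2 n k))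
      = Complex.exp (Real.pi * Complex.I *
          (((j - l).1 : ℂ) * k.1 + ((j - l).2 : ℂ) * k.2) / n) := by
    intro k
    rw [mul_star_e2]
    unfold e2 pt2
    congr 1
    simp only [Prod.fst_sub, Prod.snd_sub]
    push_cast
    field_simp
  have hL : ∑ k ∈ X2star n, (c2 n k : ℂ) * e2 j (pt2 n k) * star (e2 l (pt2 n k))
      = ∑ k ∈ X2star n, (c2 n k : ℂ) * Complex.exp (Real.pi * Complex.I *
          (((j - l).1 : ℂ) * k.1 + ((j - l).2 : ℂ) * k.2) / n) :=
    Finset.sum_congr rfl fun k _ => by rw [mul_assoc, hpt k]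
  rw [hL, disc_sum n hn (j - l)
      (by simp only [Prod.fst_sub, Prod.snd_sub]; omega)
      (by simp only [Prod.fst_sub, Prod.snd_sub]; omega)
      (by simp only [Prod.fst_sub, Prod.snd_sub]; omega)
      (by simp only [Prod.fst_sub, Prod.snd_sub]; omega)]
  rw [setIntegral_congr_fun measurableSet_Icc (fun x _ => mul_star_e2 j l x),
    int_e2 (j - l)]

theorem symmetric_discrete_inner_product_eq_integral_2d (n : ℕ) (hn : 0 < n)
    (f g : ℝ × ℝ → ℂ)
    (hf : f ∈ Submodule.span ℂ (e2 '' (Lam n : Set (ℤ × ℤ))))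
    (hg : g ∈ Submodule.span ℂ (e2 '' (Lam n : Set (ℤ × ℤ)))) :
    (1 / (2 * (n : ℂ) ^ 2)) * ∑ k ∈ X2star n, (c2 n k : ℂ) * f (pt2 n k) * star (g (pt2 n k))
      = ∫ x in Set.Icc ((-(1:ℝ)/2, -(1:ℝ)/2)) (((1:ℝ)/2, (1:ℝ)/2)), f x * star (g x) := by
  induction hf using Submodule.span_induction with
  | mem f hf' =>
    obtain ⟨j, hj, rfl⟩ := hf'
    rw [Finset.mem_coe] at hj
    induction hg using Submodule.span_induction with
    | mem g hg' =>
      obtain ⟨l, hl, rfl⟩ := hg'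
      rw [Finset.mem_coe] at hl
      exact base_case n hn j l hj hl
    | zero => simp
    | add x y hx hy ihx ihy =>
      have hcx := cont_of_mem x hx
      have hcy := cont_of_mem y hy
      have hcf := e2_cont j
      simp only [Pi.add_apply, star_add]
      have hL : ∑ k ∈ X2star n, (c2 n k : ℂ) * e2 j (pt2 n k) *
            (star (x (pt2 n k)) + star (y (pt2 n k)))
          = (∑ k ∈ X2star n, (c2 n k : ℂ) * e2 j (pt2 n k) * star (x (pt2 n k)))
            + ∑ k ∈ X2star n, (c2 n k : ℂ) * e2 j (pt2 n k) * star (y (pt2 n k)) := by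
        rw [← Finset.sum_add_distrib]
        exact Finset.sum_congr rfl fun k _ => by ring
      rw [hL, mul_add, ihx, ihy,
        ← MeasureTheory.integral_add (integ _ _ hcf hcx) (integ _ _ hcf hcy)]
      simp only [mul_add]
    | smul a x hx ih =>
      simp only [Pi.smul_apply, smul_eq_mul, star_mul', RCLike.star_def]
      have hL : ∑ k ∈ X2star n, (c2 n k : ℂ) * e2 j (pt2 n k) *
            ((starRingEnd ℂ) a * (starRingEnd ℂ) (x (pt2 n k)))
          = (starRingEnd ℂ) a * ∑ k ∈ X2star n,
              (c2 n k : ℂ) * e2 j (pt2 n k) * (starRingEnd ℂ) (x (pt2 n k)) := by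
        rw [Finset.mul_sum]
        exact Finset.sum_congr rfl fun k _ => by ring
      calc (1 / (2 * (n : ℂ) ^ 2)) * ∑ k ∈ X2star n, (c2 n k : ℂ) * e2 j (pt2 n k) *
            ((starRingEnd ℂ) a * (starRingEnd ℂ) (x (pt2 n k)))
          = (starRingEnd ℂ) a * ((1 / (2 * (n : ℂ) ^ 2)) * ∑ k ∈ X2star n,
              (c2 n k : ℂ) * e2 j (pt2 n k) * (starRingEnd ℂ) (x (pt2 n k))) := by
            rw [hL]; ring
        _ = (starRingEnd ℂ) a * ∫ t in Set.Icc ((-(1:ℝ)/2, -(1:ℝ)/2)) (((1:ℝ)/2, (1:ℝ)/2)),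
              e2 j t * star (x t) := by rw [← ih]; rfl
        _ = ∫ t in Set.Icc ((-(1:ℝ)/2, -(1:ℝ)/2)) (((1:ℝ)/2, (1:ℝ)/2)),
              e2 j t * ((starRingEnd ℂ) a * (starRingEnd ℂ) (x t)) := by
            rw [← MeasureTheory.integral_const_mul]
            exact setIntegral_congr_fun measurableSet_Icc fun t _ => by
              simp only [RCLike.star_def]; ring
  | zero => simp
  | add x y hx hy ihx ihy =>
    have hcx := cont_of_mem x hx
    have hcy := cont_of_mem y hy
    have hcg := cont_of_mem g hg
    simp only [Pi.add_apply]
    have hL : ∑ k ∈ X2star n, (c2 n k : ℂ) * (x (pt2 n k) + y (pt2 n k)) * star (g (pt2 n k))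
        = (∑ k ∈ X2star n, (c2 n k : ℂ) * x (pt2 n k) * star (g (pt2 n k)))
          + ∑ k ∈ X2star n, (c2 n k : ℂ) * y (pt2 n k) * star (g (pt2 n k)) := by
      rw [← Finset.sum_add_distrib]
      exact Finset.sum_congr rfl fun k _ => by ring
    rw [hL, mul_add, ihx, ihy,
      ← MeasureTheory.integral_add (integ _ _ hcx hcg) (integ _ _ hcy hcg)]
    simp only [add_mul]
  | smul a x hx ih =>
    simp only [Pi.smul_apply, smul_eq_mul]
    have hL : ∑ k ∈ X2star n, (c2 n k : ℂ) * (a * x (pt2 n k)) * star (g (pt2 n k))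
        = a * ∑ k ∈ X2star n, (c2 n k : ℂ) * x (pt2 n k) * star (g (pt2 n k)) := by
      rw [Finset.mul_sum]
      exact Finset.sum_congr rfl fun k _ => by ring
    calc (1 / (2 * (n : ℂ) ^ 2)) * ∑ k ∈ X2star n,
          (c2 n k : ℂ) * (a * x (pt2 n k)) * star (g (pt2 n k))
        = a * ((1 / (2 * (n : ℂ) ^ 2)) * ∑ k ∈ X2star n,
            (c2 n k : ℂ) * x (pt2 n k) * star (g (pt2 n k))) := by rw [hL]; ring
      _ = a * ∫ t in Set.Icc ((-(1:ℝ)/2, -(1:ℝ)/2)) (((1:ℝ)/2, (1:ℝ)/2)),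
            x t * star (g t) := by rw [ih]
      _ = ∫ t in Set.Icc ((-(1:ℝ)/2, -(1:ℝ)/2)) (((1:ℝ)/2, (1:ℝ)/2)),
            a * x t * star (g t) := by
          rw [← MeasureTheory.integral_const_mul]
          exact setIntegral_congr_fun measurableSet_Icc fun t _ => by ring
end

section
/- Let n ≥ 2 be an integer. For every function f in the complex linear span of {e_j : j ∈ Λ_{2n−1}^*}, both cubature formulas hold: ∫_{[−1/2,1/2]²} f(x) dx = (1/(2n²)) · Σ_{k ∈ X_n^*} c_k · f(k/(2n)) and ∫_{[−1/2,1/2]²} f(x) dx = (1/(2n²)) · Σ_{k ∈ X_n} f(k/(2n)). -/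
open MeasureTheory Complex

attribute [local instance] Classical.propDecidable

/-- Λ_m^* = {j : |j1+j2| ≤ m and |j1-j2| ≤ m}. -/
noncomputable def LamStar (m : ℕ) : Finset (ℤ × ℤ) :=
  (Finset.Icc (-(m : ℤ), -(m : ℤ)) ((m : ℤ), (m : ℤ))).filter
    fun j => |j.1 + j.2| ≤ (m : ℤ) ∧ |j.1 - j.2| ≤ (m : ℤ)

/-- X_n = {k : k1 ≡ k2 (mod 2), -n ≤ k_i < n}. -/
noncomputable def X2 (n : ℕ) : Finset (ℤ × ℤ) :=
  (Finset.Icc (-(n : ℤ), -(n : ℤ)) ((n : ℤ), (n : ℤ))).filter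
    fun k => k.1 % 2 = k.2 % 2 ∧ k.1 < (n : ℤ) ∧ k.2 < (n : ℤ)

/-! ### Auxiliary one-dimensional exponential sums -/

noncomputable def Ee (n : ℕ) (a k : ℤ) : ℂ :=
  Complex.exp ((k : ℂ) * (2 * Real.pi * Complex.I * a / (2 * n)))

lemma Ee_mul (n : ℕ) (a b k : ℤ) : Ee n a k * Ee n b k = Ee n (a + b) k := by
  unfold Ee
  rw [← Complex.exp_add]
  congr 1
  push_cast
  ring

lemma Ee_dvd (n : ℕ) (hn : 1 ≤ n) (a k : ℤ) (h : (2 * (n : ℤ)) ∣ a) : Ee n a k = 1 := by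
  obtain ⟨m, rfl⟩ := h
  unfold Ee
  have hne : (n : ℂ) ≠ 0 := Nat.cast_ne_zero.mpr (by omega)
  have : ((k : ℂ)) * (2 * Real.pi * Complex.I * ((2 * (n:ℤ) * m : ℤ) : ℂ) / (2 * n))
      = ((k * m : ℤ) : ℂ) * (2 * Real.pi * Complex.I) := by
    push_cast
    field_simp
  rw [this, Complex.exp_int_mul_two_pi_mul_I]

lemma S_eq (n : ℕ) (hn : 1 ≤ n) (a : ℤ) :
    ∑ k ∈ Finset.Icc (-(n:ℤ)) ((n:ℤ) - 1), Ee n a k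
      = if (2 * (n:ℤ)) ∣ a then (2 * n : ℂ) else 0 := by
  have hne : (n : ℂ) ≠ 0 := Nat.cast_ne_zero.mpr (by omega)
  split_ifs with hd
  · rw [Finset.sum_congr rfl (fun k _ => Ee_dvd n hn a k hd), Finset.sum_const]
    rw [Int.card_Icc]
    simp only [nsmul_eq_mul, mul_one]
    have : ((n:ℤ) - 1 + 1 - -(n:ℤ)).toNat = 2 * n := by omega
    rw [this]
    push_cast
    ring
  · set z : ℂ := Complex.exp (2 * Real.pi * Complex.I * a / (2 * n)) with hz
    have hzk : ∀ k : ℤ, Ee n a k = z ^ k := by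
      intro k
      unfold Ee
      rw [hz, Complex.exp_int_mul]
    have hz0 : z ≠ 0 := Complex.exp_ne_zero _
    have hz1 : z ≠ 1 := by
      intro h
      rw [hz, Complex.exp_eq_one_iff] at h
      obtain ⟨m, hm⟩ := h
      apply hd
      refine ⟨m, ?_⟩
      have h2 : (2 * Real.pi * Complex.I : ℂ) ≠ 0 := by
        simp [Real.pi_ne_zero, Complex.I_ne_zero]
      have : (a : ℂ) = ((2 * (n:ℤ) * m : ℤ) : ℂ) := by
        have h3 : (2 * Real.pi * Complex.I : ℂ) * (a : ℂ)
            = (2 * Real.pi * Complex.I : ℂ) * (((2 * (n:ℤ) * m : ℤ) : ℂ)) := by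
          push_cast
          field_simp at hm
          linear_combination (2 * Real.pi * Complex.I : ℂ) * hm
        exact mul_left_cancel₀ h2 h3
      exact_mod_cast this
    have key : ∑ k ∈ Finset.Icc (-(n:ℤ)) ((n:ℤ) - 1), z ^ k
        = z ^ (-(n:ℤ)) * ∑ i ∈ Finset.range (2 * n), z ^ i := by
      rw [Finset.mul_sum]
      apply Finset.sum_nbij' (i := fun k => (k + (n:ℤ)).toNat) (j := fun i => (i : ℤ) - (n:ℤ))
      · intro k hk
        simp only [Finset.mem_Icc] at hk
        simp only [Finset.mem_range]
        omega
      · intro i hi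
        simp only [Finset.mem_range] at hi
        simp only [Finset.mem_Icc]
        omega
      · intro k hk
        simp only [Finset.mem_Icc] at hk
        omega
      · intro i hi
        simp only [Finset.mem_range] at hi
        omega
      · intro k hk
        simp only [Finset.mem_Icc] at hk
        rw [← zpow_natCast z ((k + (n:ℤ)).toNat), ← zpow_add₀ hz0]
        congr 1
        omega
    have hz2n : z ^ (2 * n) = 1 := by
      rw [hz, ← Complex.exp_nat_mul]
      have : (2 * n : ℕ) * (2 * Real.pi * Complex.I * a / (2 * n))
          = (a : ℂ) * (2 * Real.pi * Complex.I) := by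
        push_cast
        field_simp
      rw [this, Complex.exp_int_mul_two_pi_mul_I]
    rw [Finset.sum_congr rfl (fun k _ => hzk k), key, geom_sum_eq hz1, hz2n]
    simp

noncomputable def dd (n : ℕ) (k : ℤ) : ℂ :=
  if k = (n:ℤ) ∨ k = -(n:ℤ) then 1/2 else 1

lemma Ee_top_eq_bot (n : ℕ) (hn : 1 ≤ n) (a : ℤ) : Ee n a (n:ℤ) = Ee n a (-(n:ℤ)) := by
  have hne : (n : ℂ) ≠ 0 := Nat.cast_ne_zero.mpr (by omega)
  unfold Ee
  have : ((n:ℤ) : ℂ) * (2 * Real.pi * Complex.I * a / (2 * n))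
      = ((-(n:ℤ) : ℤ) : ℂ) * (2 * Real.pi * Complex.I * a / (2 * n))
        + (a : ℂ) * (2 * Real.pi * Complex.I) := by
    push_cast
    field_simp
    ring
  rw [this, Complex.exp_add, Complex.exp_int_mul_two_pi_mul_I, mul_one]

lemma T_eq (n : ℕ) (hn : 1 ≤ n) (a : ℤ) :
    ∑ k ∈ Finset.Icc (-(n:ℤ)) (n:ℤ), dd n k * Ee n a k
      = if (2 * (n:ℤ)) ∣ a then (2 * n : ℂ) else 0 := by
  rw [← S_eq n hn a]
  have h1 : Finset.Icc (-(n:ℤ)) (n:ℤ) = insert (n:ℤ) (Finset.Icc (-(n:ℤ)) ((n:ℤ)-1)) := by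
    ext k; simp only [Finset.mem_insert, Finset.mem_Icc]; omega
  have h2 : Finset.Icc (-(n:ℤ)) ((n:ℤ)-1)
      = insert (-(n:ℤ)) (Finset.Icc (-(n:ℤ)+1) ((n:ℤ)-1)) := by
    ext k; simp only [Finset.mem_insert, Finset.mem_Icc]; omega
  have hnot1 : (n:ℤ) ∉ Finset.Icc (-(n:ℤ)) ((n:ℤ)-1) := by simp only [Finset.mem_Icc]; omega
  have hnot2 : (-(n:ℤ)) ∉ Finset.Icc (-(n:ℤ)+1) ((n:ℤ)-1) := by simp only [Finset.mem_Icc]; omega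
  rw [h1, Finset.sum_insert hnot1, h2, Finset.sum_insert hnot2, Finset.sum_insert hnot2]
  have hd1 : dd n (n:ℤ) = 1/2 := by simp [dd]
  have hd2 : dd n (-(n:ℤ)) = 1/2 := by simp [dd]
  have hd3 : ∀ k ∈ Finset.Icc (-(n:ℤ)+1) ((n:ℤ)-1), dd n k * Ee n a k = Ee n a k := by
    intro k hk
    simp only [Finset.mem_Icc] at hk
    have : ¬(k = (n:ℤ) ∨ k = -(n:ℤ)) := by omega
    simp [dd, this]
  rw [Finset.sum_congr rfl hd3, hd1, hd2, Ee_top_eq_bot n hn a]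
  ring

lemma e2_pt (n : ℕ) (j k : ℤ × ℤ) :
    e2 j (pt2 n k) = Ee n j.1 k.1 * Ee n j.2 k.2 := by
  unfold e2 pt2 Ee
  rw [← Complex.exp_add]
  congr 1
  push_cast
  ring

lemma eps_val (n : ℕ) (hn : 1 ≤ n) (k : ℤ) : Ee n (n:ℤ) k = (-1 : ℂ) ^ k := by
  have hne : (n : ℂ) ≠ 0 := Nat.cast_ne_zero.mpr (by omega)
  unfold Ee
  have : ((k : ℂ)) * (2 * Real.pi * Complex.I * ((n:ℤ) : ℂ) / (2 * n))
      = (k : ℂ) * (Real.pi * Complex.I) := by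
    push_cast
    field_simp
  rw [this, Complex.exp_int_mul, Complex.exp_pi_mul_I]

lemma eps_prod (n : ℕ) (hn : 1 ≤ n) (k1 k2 : ℤ) :
    Ee n (n:ℤ) k1 * Ee n (n:ℤ) k2 = if k1 % 2 = k2 % 2 then 1 else -1 := by
  rw [eps_val n hn, eps_val n hn, ← zpow_add₀ (by norm_num : (-1:ℂ) ≠ 0)]
  split_ifs with h
  · have : Even (k1 + k2) := by rw [Int.even_iff]; omega
    exact Even.neg_one_zpow this
  · have : Odd (k1 + k2) := by rw [Int.odd_iff]; omega
    exact Odd.neg_one_zpow this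

lemma c2_eq_dd (n : ℕ) (k : ℤ × ℤ) (h1 : -(n:ℤ) ≤ k.1) (h2 : k.1 ≤ (n:ℤ))
    (h3 : -(n:ℤ) ≤ k.2) (h4 : k.2 ≤ (n:ℤ)) :
    ((c2 n k : ℝ) : ℂ) = dd n k.1 * dd n k.2 := by
  have hn0 : (0:ℤ) ≤ (n:ℤ) := by positivity
  simp only [c2, dd, abs_lt, abs_eq hn0]
  split_ifs
  all_goals first
    | omega
    | (push_cast; norm_num)

lemma sum_parity_filter (n : ℕ) (hn : 1 ≤ n) (s t : Finset ℤ) (F G : ℤ → ℂ) :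
    ∑ k ∈ (s ×ˢ t).filter (fun k : ℤ × ℤ => k.1 % 2 = k.2 % 2), F k.1 * G k.2
      = ((∑ k ∈ s, F k) * (∑ k ∈ t, G k)
        + (∑ k ∈ s, F k * Ee n (n:ℤ) k) * (∑ k ∈ t, G k * Ee n (n:ℤ) k)) / 2 := by
  rw [Finset.sum_filter]
  have key : ∀ k ∈ s ×ˢ t, (if k.1 % 2 = k.2 % 2 then F k.1 * G k.2 else 0)
      = (F k.1 * G k.2 + (F k.1 * Ee n (n:ℤ) k.1) * (G k.2 * Ee n (n:ℤ) k.2)) / 2 := by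
    intro k _
    have e := eps_prod n hn k.1 k.2
    by_cases h : k.1 % 2 = k.2 % 2
    · rw [if_pos h] at e ⊢
      linear_combination (-(F k.1 * G k.2) / 2) * e
    · rw [if_neg h] at e ⊢
      linear_combination (-(F k.1 * G k.2) / 2) * e
  rw [Finset.sum_congr rfl key, ← Finset.sum_div, Finset.sum_add_distrib]
  congr 2
  · rw [Finset.sum_product, Finset.sum_mul_sum]
  · rw [Finset.sum_product, Finset.sum_mul_sum]

lemma sumX2 (n : ℕ) (hn : 1 ≤ n) (j : ℤ × ℤ) :
    ∑ k ∈ X2 n, e2 j (pt2 n k)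
      = ((if (2 * (n:ℤ)) ∣ j.1 then (2 * n : ℂ) else 0)
          * (if (2 * (n:ℤ)) ∣ j.2 then (2 * n : ℂ) else 0)
        + (if (2 * (n:ℤ)) ∣ (j.1 + n) then (2 * n : ℂ) else 0)
          * (if (2 * (n:ℤ)) ∣ (j.2 + n) then (2 * n : ℂ) else 0)) / 2 := by
  have hX : X2 n = ((Finset.Icc (-(n:ℤ)) ((n:ℤ)-1)) ×ˢ (Finset.Icc (-(n:ℤ)) ((n:ℤ)-1))).filter
      (fun k : ℤ × ℤ => k.1 % 2 = k.2 % 2) := by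
    ext k
    simp only [X2, Finset.mem_filter, Finset.mem_Icc, Finset.mem_product, Prod.le_def]
    omega
  rw [hX, Finset.sum_congr rfl (fun k _ => e2_pt n j k),
    sum_parity_filter n hn _ _ (Ee n j.1) (Ee n j.2)]
  have m1 : ∀ a : ℤ, (∑ k ∈ Finset.Icc (-(n:ℤ)) ((n:ℤ)-1), Ee n a k * Ee n (n:ℤ) k)
      = ∑ k ∈ Finset.Icc (-(n:ℤ)) ((n:ℤ)-1), Ee n (a + n) k :=
    fun a => Finset.sum_congr rfl (fun k _ => Ee_mul n a (n:ℤ) k)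
  rw [m1, m1, S_eq n hn, S_eq n hn, S_eq n hn, S_eq n hn]

lemma sumX2star (n : ℕ) (hn : 1 ≤ n) (j : ℤ × ℤ) :
    ∑ k ∈ X2star n, ((c2 n k : ℝ) : ℂ) * e2 j (pt2 n k)
      = ((if (2 * (n:ℤ)) ∣ j.1 then (2 * n : ℂ) else 0)
          * (if (2 * (n:ℤ)) ∣ j.2 then (2 * n : ℂ) else 0)
        + (if (2 * (n:ℤ)) ∣ (j.1 + n) then (2 * n : ℂ) else 0)
          * (if (2 * (n:ℤ)) ∣ (j.2 + n) then (2 * n : ℂ) else 0)) / 2 := by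
  have hX : X2star n = ((Finset.Icc (-(n:ℤ)) ((n:ℤ))) ×ˢ (Finset.Icc (-(n:ℤ)) ((n:ℤ)))).filter
      (fun k : ℤ × ℤ => k.1 % 2 = k.2 % 2) := by
    ext k
    simp only [X2star, Finset.mem_filter, Finset.mem_Icc, Finset.mem_product, Prod.le_def]
    omega
  have hterm : ∀ k ∈ ((Finset.Icc (-(n:ℤ)) ((n:ℤ))) ×ˢ (Finset.Icc (-(n:ℤ)) ((n:ℤ)))).filter
      (fun k : ℤ × ℤ => k.1 % 2 = k.2 % 2),
      ((c2 n k : ℝ) : ℂ) * e2 j (pt2 n k)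
        = (dd n k.1 * Ee n j.1 k.1) * (dd n k.2 * Ee n j.2 k.2) := by
    intro k hk
    simp only [Finset.mem_filter, Finset.mem_product, Finset.mem_Icc] at hk
    rw [e2_pt n j k, c2_eq_dd n k hk.1.1.1 hk.1.1.2 hk.1.2.1 hk.1.2.2]
    ring
  rw [hX, Finset.sum_congr rfl hterm,
    sum_parity_filter n hn _ _ (fun k => dd n k * Ee n j.1 k) (fun k => dd n k * Ee n j.2 k)]
  have m1 : ∀ a : ℤ, (∑ k ∈ Finset.Icc (-(n:ℤ)) ((n:ℤ)), (dd n k * Ee n a k) * Ee n (n:ℤ) k)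
      = ∑ k ∈ Finset.Icc (-(n:ℤ)) ((n:ℤ)), dd n k * Ee n (a + n) k :=
    fun a => Finset.sum_congr rfl (fun k _ => by rw [mul_assoc, Ee_mul])
  rw [m1, m1, T_eq n hn, T_eq n hn, T_eq n hn, T_eq n hn]

lemma eval_sum (n : ℕ) (hn : 2 ≤ n) (j : ℤ × ℤ)
    (hj1 : |j.1 + j.2| ≤ 2*(n:ℤ) - 1) (hj2 : |j.1 - j.2| ≤ 2*(n:ℤ) - 1) :
    ((if (2 * (n:ℤ)) ∣ j.1 then (2 * n : ℂ) else 0)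
        * (if (2 * (n:ℤ)) ∣ j.2 then (2 * n : ℂ) else 0)
      + (if (2 * (n:ℤ)) ∣ (j.1 + n) then (2 * n : ℂ) else 0)
        * (if (2 * (n:ℤ)) ∣ (j.2 + n) then (2 * n : ℂ) else 0)) / 2
      = if j = 0 then 2 * (n:ℂ)^2 else 0 := by
  have hnz : (2:ℤ) ≤ (n:ℤ) := by exact_mod_cast hn
  have hmul : ∀ m : ℤ, |2*(n:ℤ)*m| ≤ 2*(n:ℤ) - 1 → m = 0 := by
    intro m h
    by_contra hm
    have h1 : 1 ≤ |m| := Int.one_le_abs (by omega)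
    have h2 : |2*(n:ℤ)*m| = 2*(n:ℤ)*|m| := by
      rw [abs_mul, abs_of_nonneg (by omega : (0:ℤ) ≤ 2*(n:ℤ))]
    nlinarith
  have hA : ¬((2*(n:ℤ)) ∣ (j.1 + n) ∧ (2*(n:ℤ)) ∣ (j.2 + n)) := by
    rintro ⟨⟨a, ha⟩, ⟨b, hb⟩⟩
    have hs : j.1 + j.2 = 2*(n:ℤ)*(a+b-1) := by linear_combination ha + hb
    have hd : j.1 - j.2 = 2*(n:ℤ)*(a-b) := by linear_combination ha - hb
    have e1 : a + b - 1 = 0 := hmul _ (by rw [← hs]; exact hj1)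
    have e2 : a - b = 0 := hmul _ (by rw [← hd]; exact hj2)
    omega
  have hB : (2*(n:ℤ)) ∣ j.1 ∧ (2*(n:ℤ)) ∣ j.2 → j = 0 := by
    rintro ⟨⟨a, ha⟩, ⟨b, hb⟩⟩
    have hs : j.1 + j.2 = 2*(n:ℤ)*(a+b) := by linear_combination ha + hb
    have hd : j.1 - j.2 = 2*(n:ℤ)*(a-b) := by linear_combination ha - hb
    have e1 : a + b = 0 := hmul _ (by rw [← hs]; exact hj1)
    have e2 : a - b = 0 := hmul _ (by rw [← hd]; exact hj2)
    have : a = 0 ∧ b = 0 := by omega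
    have hj1' : j.1 = 0 := by rw [ha, this.1]; ring
    have hj2' : j.2 = 0 := by rw [hb, this.2]; ring
    exact Prod.ext hj1' hj2'
  have hsecond : (if (2 * (n:ℤ)) ∣ (j.1 + n) then (2 * n : ℂ) else 0)
      * (if (2 * (n:ℤ)) ∣ (j.2 + n) then (2 * n : ℂ) else 0) = 0 := by
    rcases not_and_or.mp hA with h | h
    · rw [if_neg h, zero_mul]
    · rw [if_neg h, mul_zero]
  rw [hsecond, add_zero]
  by_cases hj : j = 0
  · rw [if_pos hj]
    subst hj
    simp only [Prod.fst_zero, Prod.snd_zero, dvd_zero, if_true]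
    ring
  · rw [if_neg hj]
    rcases not_and_or.mp (fun h => hj (hB h)) with h | h
    · rw [if_neg h, zero_mul, zero_div]
    · rw [if_neg h, mul_zero, zero_div]

/-! ### Integral computations -/

lemma intOne (a : ℤ) :
    ∫ t in Set.Icc (-(1:ℝ)/2) ((1:ℝ)/2), Complex.exp (2 * Real.pi * Complex.I * a * t)
      = if a = 0 then 1 else 0 := by
  split_ifs with h
  · subst h
    simp only [Int.cast_zero, mul_zero, zero_mul, Complex.exp_zero]
    rw [MeasureTheory.setIntegral_const, Real.volume_real_Icc]
    norm_num
  · have hc : (2 * Real.pi * Complex.I * (a:ℂ)) ≠ 0 := by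
      apply mul_ne_zero
      apply mul_ne_zero
      apply mul_ne_zero
      · norm_num
      · exact_mod_cast Complex.ofReal_ne_zero.mpr Real.pi_ne_zero
      · exact Complex.I_ne_zero
      · exact_mod_cast Int.cast_ne_zero.mpr h
    rw [MeasureTheory.integral_Icc_eq_integral_Ioc,
      ← intervalIntegral.integral_of_le (by norm_num : (-(1:ℝ)/2) ≤ (1:ℝ)/2),
      integral_exp_mul_complex hc]
    have key : Complex.exp (2 * Real.pi * Complex.I * (a:ℂ) * (((1:ℝ)/2 : ℝ) : ℂ))
        = Complex.exp (2 * Real.pi * Complex.I * (a:ℂ) * ((-(1:ℝ)/2 : ℝ) : ℂ)) := by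
      have harg : 2 * Real.pi * Complex.I * (a:ℂ) * (((1:ℝ)/2 : ℝ) : ℂ)
          = 2 * Real.pi * Complex.I * (a:ℂ) * ((-(1:ℝ)/2 : ℝ) : ℂ)
            + (a : ℂ) * (2 * Real.pi * Complex.I) := by
        push_cast
        ring
      rw [harg, Complex.exp_add, Complex.exp_int_mul_two_pi_mul_I, mul_one]
    rw [key, sub_self, zero_div]

lemma intE (j : ℤ × ℤ) :
    ∫ x in Set.Icc ((-(1:ℝ)/2, -(1:ℝ)/2)) (((1:ℝ)/2, (1:ℝ)/2)), e2 j x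
      = if j = 0 then 1 else 0 := by
  have hsplit : ∀ x : ℝ × ℝ, e2 j x
      = Complex.exp (2 * Real.pi * Complex.I * (j.1:ℂ) * x.1)
        * Complex.exp (2 * Real.pi * Complex.I * (j.2:ℂ) * x.2) := by
    intro x
    unfold e2
    rw [← Complex.exp_add]
    congr 1
    ring
  rw [Set.Icc_prod_eq]
  simp only [hsplit]
  rw [MeasureTheory.Measure.volume_eq_prod,
    MeasureTheory.setIntegral_prod_mul
      (fun t : ℝ => Complex.exp (2 * Real.pi * Complex.I * (j.1:ℂ) * t))
      (fun t : ℝ => Complex.exp (2 * Real.pi * Complex.I * (j.2:ℂ) * t))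
      (Set.Icc (-(1:ℝ)/2) ((1:ℝ)/2)) (Set.Icc (-(1:ℝ)/2) ((1:ℝ)/2))]
  rw [intOne j.1, intOne j.2]
  by_cases h : j = 0
  · rw [if_pos h, if_pos (by simp [h] : j.1 = 0), if_pos (by simp [h] : j.2 = 0), mul_one]
  · rw [if_neg h]
    have : ¬(j.1 = 0) ∨ ¬(j.2 = 0) := by
      by_contra hc
      push_neg at hc
      exact h (Prod.ext hc.1 hc.2)
    rcases this with h1 | h1
    · rw [if_neg h1, zero_mul]
    · rw [if_neg h1, mul_zero]

theorem trig_cubature_2d (n : ℕ) (hn : 2 ≤ n)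
    (f : ℝ × ℝ → ℂ)
    (hf : f ∈ Submodule.span ℂ (e2 '' (LamStar (2 * n - 1) : Set (ℤ × ℤ)))) :
    (∫ x in Set.Icc ((-(1:ℝ)/2, -(1:ℝ)/2)) (((1:ℝ)/2, (1:ℝ)/2)), f x
        = (1 / (2 * (n : ℂ) ^ 2)) * ∑ k ∈ X2star n, (c2 n k : ℂ) * f (pt2 n k)) ∧
    (∫ x in Set.Icc ((-(1:ℝ)/2, -(1:ℝ)/2)) (((1:ℝ)/2, (1:ℝ)/2)), f x
        = (1 / (2 * (n : ℂ) ^ 2)) * ∑ k ∈ X2 n, f (pt2 n k)) := by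
  have hn1 : 1 ≤ n := by omega
  have hncC : (2 * (n:ℂ)^2) ≠ 0 := by
    have : (n : ℂ) ≠ 0 := Nat.cast_ne_zero.mpr (by omega)
    exact mul_ne_zero two_ne_zero (pow_ne_zero 2 this)
  set D : Set (ℝ × ℝ) := Set.Icc ((-(1:ℝ)/2, -(1:ℝ)/2)) (((1:ℝ)/2, (1:ℝ)/2)) with hD
  have H := Submodule.span_induction
    (p := fun (g : ℝ × ℝ → ℂ) _ =>
      IntegrableOn g D volume ∧
      ((∫ x in D, g x) = (1 / (2 * (n : ℂ) ^ 2)) * ∑ k ∈ X2star n, (c2 n k : ℂ) * g (pt2 n k)) ∧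
      ((∫ x in D, g x) = (1 / (2 * (n : ℂ) ^ 2)) * ∑ k ∈ X2 n, g (pt2 n k)))
    ?_ ?_ ?_ ?_ hf
  · exact ⟨H.2.1, H.2.2⟩
  · -- generators
    rintro g ⟨j, hj, rfl⟩
    rw [Finset.mem_coe] at hj
    have hjm : |j.1 + j.2| ≤ 2*(n:ℤ) - 1 ∧ |j.1 - j.2| ≤ 2*(n:ℤ) - 1 := by
      simp only [LamStar, Finset.mem_filter, Finset.mem_Icc] at hj
      have hc : ((2*n-1 : ℕ) : ℤ) = 2*(n:ℤ) - 1 := by omega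
      rw [hc] at hj
      exact hj.2
    have hcont : Continuous (e2 j) := by
      unfold e2
      fun_prop
    have hint : IntegrableOn (e2 j) D volume :=
      hcont.continuousOn.integrableOn_compact isCompact_Icc
    have hval : (∫ x in D, e2 j x) = if j = 0 then 1 else 0 := intE j
    have he : (if j = 0 then (1:ℂ) else 0)
        = (1 / (2 * (n : ℂ) ^ 2)) * (if j = 0 then 2 * (n:ℂ)^2 else 0) := by
      split_ifs
      · field_simp
        exact (div_self (Nat.cast_ne_zero.mpr (by omega))).symm
      · ring
    refine ⟨hint, ?_, ?_⟩
    · rw [hval, sumX2star n hn1 j, eval_sum n hn j hjm.1 hjm.2, he]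
    · rw [hval, sumX2 n hn1 j, eval_sum n hn j hjm.1 hjm.2, he]
  · -- zero
    refine ⟨integrableOn_zero, ?_, ?_⟩ <;> simp
  · -- add
    rintro g h _ _ ⟨hgI, hg1, hg2⟩ ⟨hhI, hh1, hh2⟩
    refine ⟨hgI.add hhI, ?_, ?_⟩
    · have hi : (∫ x in D, (g + h) x) = (∫ x in D, g x) + (∫ x in D, h x) := by
        simp only [Pi.add_apply]
        exact MeasureTheory.integral_add hgI hhI
      have hs : ∑ k ∈ X2star n, (c2 n k : ℂ) * (g + h) (pt2 n k)
          = (∑ k ∈ X2star n, (c2 n k : ℂ) * g (pt2 n k))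
            + (∑ k ∈ X2star n, (c2 n k : ℂ) * h (pt2 n k)) := by
        rw [← Finset.sum_add_distrib]
        exact Finset.sum_congr rfl (fun k _ => by simp [Pi.add_apply]; ring)
      rw [hi, hg1, hh1, hs]
      ring
    · have hi : (∫ x in D, (g + h) x) = (∫ x in D, g x) + (∫ x in D, h x) := by
        simp only [Pi.add_apply]
        exact MeasureTheory.integral_add hgI hhI
      have hs : ∑ k ∈ X2 n, (g + h) (pt2 n k)
          = (∑ k ∈ X2 n, g (pt2 n k)) + (∑ k ∈ X2 n, h (pt2 n k)) := by
        rw [← Finset.sum_add_distrib]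
        exact Finset.sum_congr rfl (fun k _ => by simp [Pi.add_apply])
      rw [hi, hg2, hh2, hs]
      ring
  · -- smul
    rintro a g _ ⟨hgI, hg1, hg2⟩
    refine ⟨hgI.smul a, ?_, ?_⟩
    · have hi : (∫ x in D, (a • g) x) = a * (∫ x in D, g x) := by
        simp only [Pi.smul_apply, smul_eq_mul]
        rw [← smul_eq_mul, ← integral_smul]
        simp [smul_eq_mul]
      have hs : ∑ k ∈ X2star n, (c2 n k : ℂ) * (a • g) (pt2 n k)
          = a * ∑ k ∈ X2star n, (c2 n k : ℂ) * g (pt2 n k) := by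
        rw [Finset.mul_sum]
        exact Finset.sum_congr rfl (fun k _ => by simp [Pi.smul_apply, smul_eq_mul]; ring)
      rw [hi, hg1, hs]
      ring
    · have hi : (∫ x in D, (a • g) x) = a * (∫ x in D, g x) := by
        simp only [Pi.smul_apply, smul_eq_mul]
        rw [← smul_eq_mul, ← integral_smul]
        simp [smul_eq_mul]
      have hs : ∑ k ∈ X2 n, (a • g) (pt2 n k) = a * ∑ k ∈ X2 n, g (pt2 n k) := by
        rw [Finset.mul_sum]
        exact Finset.sum_congr rfl (fun k _ => by simp [Pi.smul_apply, smul_eq_mul])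
      rw [hi, hg2, hs]
      ring
end
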